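/- Let h > k ≥ 0 be integers, n_t > 0, and p₀, p₁ > 0 with p₀ + p₁ = 1. Define λ_n = p₁·C(n,k)·n_t^(n−k)/(n_t+1)^(n+1) − p₀·C(n,h)·n_t^(n−h)/(n_t+1)^(n+1) for n ≥ h (with the convention that for k ≤ n < h, λ_n = p₁·C(n,k)·n_t^(n−k)/(n_t+1)^(n+1), and λ_n = 0 for n < k). Then if λ_n < 0 for some n ≥ h, it follows that λ_{n+1} < 0. -/

import Mathlib

/-- Eigenvalues `λ_n` of the decision operator `p₁·ρ(0,k) − p₀·ρ(0,h)`: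
`λ_n = 0` for `n < k`; `λ_n = p₁ C(n,k) n_t^(n−k)/(n_t+1)^(n+1)` for `k ≤ n < h`;
`λ_n = p₁ C(n,k) n_t^(n−k)/(n_t+1)^(n+1) − p₀ C(n,h) n_t^(n−h)/(n_t+1)^(n+1)` for `n ≥ h`. -/
noncomputable def lam (k h : ℕ) (nt p0 p1 : ℝ) (n : ℕ) : ℝ :=
  if n < k then 0
  else if n < h then p1 * (n.choose k) * nt ^ (n - k) / (nt + 1) ^ (n + 1)
  else p1 * (n.choose k) * nt ^ (n - k) / (nt + 1) ^ (n + 1)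
    - p0 * (n.choose h) * nt ^ (n - h) / (nt + 1) ^ (n + 1)

lemma choose_cast_id (n j : ℕ) (hj : j ≤ n + 1) :
    ((n+1).choose j : ℝ) * ((n:ℝ) + 1 - j) = (n.choose j : ℝ) * ((n:ℝ) + 1) := by
  have h1 : (n.choose j * (n+1) : ℕ) = (n+1).choose j * (n+1-j) := Nat.choose_mul_succ_eq n j
  have h2 : ((n.choose j : ℝ)) * ((n:ℝ)+1) = ((n+1).choose j : ℝ) * (((n+1-j : ℕ)) : ℝ) := by
    exact_mod_cast congrArg (Nat.cast : ℕ → ℝ) h1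
  rw [Nat.cast_sub hj] at h2
  push_cast at h2 ⊢
  linarith

/-- Once the eigenvalue sequence becomes negative it stays negative:
if `λ_n < 0` for some `n ≥ h` then `λ_{n+1} < 0`. -/
theorem lam_neg_step (k h : ℕ) (hkh : k < h) (nt p0 p1 : ℝ) (hnt : 0 < nt)
    (hp0 : 0 < p0) (hp1 : 0 < p1) (hp : p0 + p1 = 1)
    (n : ℕ) (hn : h ≤ n) (hneg : lam k h nt p0 p1 n < 0) :
    lam k h nt p0 p1 (n + 1) < 0 := by
  have hkn : k ≤ n := le_of_lt (lt_of_lt_of_le hkh hn)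
  have hD : (0:ℝ) < (nt + 1) ^ (n + 1) := by positivity
  have hD' : (0:ℝ) < (nt + 1) ^ (n + 1 + 1) := by positivity
  simp only [lam, if_neg (by omega : ¬ n < k), if_neg (by omega : ¬ n < h),
    if_neg (by omega : ¬ n + 1 < k), if_neg (by omega : ¬ n + 1 < h)] at hneg ⊢
  rw [div_sub_div_same] at hneg ⊢
  rw [div_neg_iff] at hneg ⊢
  right
  refine ⟨?_, hD'⟩
  have hAB : p1 * (n.choose k : ℝ) * nt ^ (n - k) < p0 * (n.choose h : ℝ) * nt ^ (n - h) := by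
    rcases hneg with ⟨_, hd⟩ | ⟨hnum, _⟩
    · linarith
    · linarith
  -- identities
  have hck := choose_cast_id n k (by omega)
  have hch := choose_cast_id n h (by omega)
  have hpk : nt ^ (n + 1 - k) = nt * nt ^ (n - k) := by
    rw [show n + 1 - k = (n - k) + 1 by omega, pow_succ]; ring
  have hph : nt ^ (n + 1 - h) = nt * nt ^ (n - h) := by
    rw [show n + 1 - h = (n - h) + 1 by omega, pow_succ]; ring
  rw [sub_neg]
  rw [hpk, hph]
  have hhk : ((n:ℝ) + 1 - h) < ((n:ℝ) + 1 - k) := by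
    have : (k:ℝ) < h := by exact_mod_cast hkh
    linarith
  have hhpos : (0:ℝ) < (n:ℝ) + 1 - h := by
    have : (h:ℝ) ≤ n := by exact_mod_cast hn
    linarith
  have hA'nonneg : (0:ℝ) ≤ p1 * ((n+1).choose k : ℝ) * (nt * nt ^ (n - k)) := by positivity
  -- multiply goal by (n+1-h) > 0
  rw [← mul_lt_mul_iff_of_pos_right hhpos]
  calc p1 * ((n+1).choose k : ℝ) * (nt * nt ^ (n - k)) * ((n:ℝ) + 1 - h)
      ≤ p1 * ((n+1).choose k : ℝ) * (nt * nt ^ (n - k)) * ((n:ℝ) + 1 - k) := by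
        exact mul_le_mul_of_nonneg_left (le_of_lt hhk) hA'nonneg
    _ = p1 * (n.choose k : ℝ) * nt ^ (n - k) * (((n:ℝ) + 1) * nt) := by
        have : p1 * (((n+1).choose k : ℝ) * ((n:ℝ) + 1 - k)) * (nt * nt ^ (n - k))
            = p1 * ((n.choose k : ℝ) * ((n:ℝ) + 1)) * (nt * nt ^ (n - k)) := by rw [hck]
        linarith [this]
    _ < p0 * (n.choose h : ℝ) * nt ^ (n - h) * (((n:ℝ) + 1) * nt) := by
        have hpos : (0:ℝ) < ((n:ℝ) + 1) * nt := by positivity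
        exact mul_lt_mul_of_pos_right hAB hpos
    _ = p0 * ((n+1).choose h : ℝ) * (nt * nt ^ (n - h)) * ((n:ℝ) + 1 - h) := by
        have : p0 * (((n+1).choose h : ℝ) * ((n:ℝ) + 1 - h)) * (nt * nt ^ (n - h))
            = p0 * ((n.choose h : ℝ) * ((n:ℝ) + 1)) * (nt * nt ^ (n - h)) := by rw [hch]
        linarith [this]
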